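/- Let T > 0 and fix constants a, b, 𝔠 > 0, p ≥ 0, κ_α ≥ 0, κ_U > 0, σ_S, σ_α, σ_U > 0, ρ ∈ [−1,1], ρ₀, ρ₁, β₀, β₁ > 0; let f₁, f₂, f₃ : [0,T] → ℝ and V : [0,T] → [0,∞) be continuous with a − b·f₂(t)² > 0 for all t. Define the matrix-valued functions P₇(t) = (a − b f₂²)^{−1/2}·( p/2, b f₁f₂, 0, b f₂f₃ ) (a row 4-vector) and P₈(t) = (2√(a − b f₂²))⁻¹·( 1−f₂, 0, 0, f₂ ), and P₉ = 2P₈ᵀP₇ + P₂ᵀ with P₂ the 4×4 matrix with rows (0,0,0,0), (−f₁,−κ_α,0,f₁), (−1,0,−κ_U,0), (−f₃,0,0,f₃), and P₅ the symmetric 4×4 matrix with rows (−ρ₀−ρ₁V, 1/2, 0, 0), (1/2, b f₁², 0, b f₁f₃), (0,0,𝔠,0), (0, b f₁f₃, 0, b f₃²). Suppose G₂ : [0,T] → ℝ^{4×4} is C¹, symmetric-valued, and solves G₂' = −P₇ᵀP₇ − 4G₂ᵀP₈ᵀP₈G₂ − G₂ᵀP₉ − P₉ᵀG₂ − P₅ with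 G₂(T) = diag(−(β₀+β₁V(T)),0,0,0), and G₀ : [0,T] → ℝ is C¹ with G₀'(t) = −((V(t)+ρσ_Sσ_α)/σ_S)²·(G₂(t))₂₂ − σ_U²·(G₂(t))₃₃ and G₀(T) = 0. Define H(t,s,x,q,m,ξ,r) = x + qs + G₀(t) + ỹ·G₂(t)·ỹᵀ with ỹ = (q, m, ξ, r). Then for all (t,s,x,q,m,ξ,r) ∈ [0,T)×ℝ⁶, H satisfies 0 = ∂ₜH + sup_{ν∈ℝ}[ (pν+m)∂ₛH − ν(s+aν)∂ₓH + η*(s+bη*)∂ₓH + ξ(s+𝔠ξ)∂ₓH + (ν−η*−ξ)∂_qH + η*∂_rH ] − κ_α m ∂_mH − κ_U ξ ∂_ξH + ½σ_S²∂_{ss}H + ½((V(t)+ρσ_Sσ_α)/σ_S)²∂_{mm}H + ½σ_U²∂_{ξξ}H + (V(t)+ρσ_Sσ_α)∂_{sm}H − (ρ₀+ρ₁V(t))q², where η* = η*(ν) = f₁(t)m + f₂(t)ν + f₃(t)r; the supremum is finite and attained uniquely at ν* = (a − b f₂(t)²)^{−1/2}·( P₇(t) + 2P₈(t)G₂(t)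 )·ỹᵀ; H(T,·) = x + qs − (β₀+β₁V(T))q²; and H is bounded by a quadratic growth in (s,x,q,m,ξ,r) uniformly in t. -/

import Mathlib

open Set Matrix

/-! Partial-derivative abbreviations for a function
`H : ℝ → ℝ → ℝ → ℝ → ℝ → ℝ → ℝ → ℝ` of `(t, s, x, q, m, ξ, r)`. -/

noncomputable def bT (T : ℝ) (H : ℝ → ℝ → ℝ → ℝ → ℝ → ℝ → ℝ → ℝ)
    (t s x q m ξ r : ℝ) : ℝ :=
  derivWithin (fun τ => H τ s x q m ξ r) (Icc 0 T) t

noncomputable def bS (H : ℝ → ℝ → ℝ → ℝ → ℝ → ℝ → ℝ → ℝ) (t s x q m ξ r : ℝ) : ℝ :=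
  deriv (fun y => H t y x q m ξ r) s

noncomputable def bX (H : ℝ → ℝ → ℝ → ℝ → ℝ → ℝ → ℝ → ℝ) (t s x q m ξ r : ℝ) : ℝ :=
  deriv (fun y => H t s y q m ξ r) x

noncomputable def bQ (H : ℝ → ℝ → ℝ → ℝ → ℝ → ℝ → ℝ → ℝ) (t s x q m ξ r : ℝ) : ℝ :=
  deriv (fun y => H t s x y m ξ r) q

noncomputable def bM (H : ℝ → ℝ → ℝ → ℝ → ℝ → ℝ → ℝ → ℝ) (t s x q m ξ r : ℝ) : ℝ :=
  deriv (fun y => H t s x q y ξ r) m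

noncomputable def bXi (H : ℝ → ℝ → ℝ → ℝ → ℝ → ℝ → ℝ → ℝ) (t s x q m ξ r : ℝ) : ℝ :=
  deriv (fun y => H t s x q m y r) ξ

noncomputable def bR (H : ℝ → ℝ → ℝ → ℝ → ℝ → ℝ → ℝ → ℝ) (t s x q m ξ r : ℝ) : ℝ :=
  deriv (fun y => H t s x q m ξ y) r

noncomputable def bSS (H : ℝ → ℝ → ℝ → ℝ → ℝ → ℝ → ℝ → ℝ) (t s x q m ξ r : ℝ) : ℝ :=
  deriv (fun y => bS H t y x q m ξ r) s

noncomputable def bMM (H : ℝ → ℝ → ℝ → ℝ → ℝ → ℝ → ℝ → ℝ) (t s x q m ξ r : ℝ) : ℝ :=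
  deriv (fun y => bM H t s x q y ξ r) m

noncomputable def bXiXi (H : ℝ → ℝ → ℝ → ℝ → ℝ → ℝ → ℝ → ℝ) (t s x q m ξ r : ℝ) : ℝ :=
  deriv (fun y => bXi H t s x q m y r) ξ

noncomputable def bSM (H : ℝ → ℝ → ℝ → ℝ → ℝ → ℝ → ℝ → ℝ) (t s x q m ξ r : ℝ) : ℝ :=
  deriv (fun y => bS H t s x q y ξ r) m

/-- The matrix `P₂`. -/
def P2mat (κα κU f₁ f₃ : ℝ) : Matrix (Fin 4) (Fin 4) ℝ :=
  !![0, 0, 0, 0; -f₁, -κα, 0, f₁; -1, 0, -κU, 0; -f₃, 0, 0, f₃]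

/-- The symmetric matrix `P₅`. -/
noncomputable def P5mat (b cc ρ₀ ρ₁ Vt f₁ f₃ : ℝ) : Matrix (Fin 4) (Fin 4) ℝ :=
  !![-ρ₀ - ρ₁ * Vt, 1 / 2, 0, 0;
     1 / 2, b * f₁ ^ 2, 0, b * f₁ * f₃;
     0, 0, cc, 0;
     0, b * f₁ * f₃, 0, b * f₃ ^ 2]

/-- The row vector `P₇ = (a - b f₂²)^{-1/2}·(p/2, b f₁ f₂, 0, b f₂ f₃)`. -/
noncomputable def P7vec (a b p f₁ f₂ f₃ : ℝ) : Fin 4 → ℝ :=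
  (Real.sqrt (a - b * f₂ ^ 2))⁻¹ • ![p / 2, b * f₁ * f₂, 0, b * f₂ * f₃]

/-- The row vector `P₈ = (2√(a - b f₂²))⁻¹·(1 - f₂, 0, 0, f₂)`. -/
noncomputable def P8vec (a b f₂ : ℝ) : Fin 4 → ℝ :=
  (2 * Real.sqrt (a - b * f₂ ^ 2))⁻¹ • ![1 - f₂, 0, 0, f₂]

/-- The matrix `P₉ = 2P₈ᵀP₇ + P₂ᵀ`. -/
noncomputable def P9mat (a b p κα κU f₁ f₂ f₃ : ℝ) : Matrix (Fin 4) (Fin 4) ℝ :=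
  (2 : ℝ) • Matrix.vecMulVec (P8vec a b f₂) (P7vec a b p f₁ f₂ f₃)
    + (P2mat κα κU f₁ f₃)ᵀ

/-- Right-hand side of the broker's 4×4 matrix Riccati ODE,
`G' = -P₇ᵀP₇ - 4GᵀP₈ᵀP₈G - GᵀP₉ - P₉ᵀG - P₅`. -/
noncomputable def brokerRiccatiRHS (a b p κα κU cc ρ₀ ρ₁ Vt f₁ f₂ f₃ : ℝ)
    (G : Matrix (Fin 4) (Fin 4) ℝ) : Matrix (Fin 4) (Fin 4) ℝ :=
  -(Matrix.vecMulVec (P7vec a b p f₁ f₂ f₃) (P7vec a b p f₁ f₂ f₃))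
    - (4 : ℝ) • (Gᵀ * Matrix.vecMulVec (P8vec a b f₂) (P8vec a b f₂) * G)
    - Gᵀ * P9mat a b p κα κU f₁ f₂ f₃
    - (P9mat a b p κα κU f₁ f₂ f₃)ᵀ * G
    - P5mat b cc ρ₀ ρ₁ Vt f₁ f₃


private lemma deriv_quad (A B C x : ℝ) : deriv (fun y => A*y^2 + B*y + C) x = 2*A*x + B := by
  have h1 : HasDerivAt (fun y : ℝ => y^2) (2*x) x := by simpa using hasDerivAt_pow 2 x
  have h : HasDerivAt (fun y : ℝ => A*y^2 + B*y + C) (A*(2*x) + B*1) x :=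
    ((h1.const_mul A).add ((hasDerivAt_id x).const_mul B)).add_const C
  rw [h.deriv]; ring

private lemma quadmax {A : ℝ} (hA : 0 < A) (F : ℝ → ℝ) (vs : ℝ)
    (hF : ∀ ν, F ν = F vs - A*(ν - vs)^2) :
    IsGreatest (Set.range F) (F vs) ∧ ∀ ν, F ν = F vs → ν = vs := by
  refine ⟨⟨⟨vs, rfl⟩, ?_⟩, ?_⟩
  · rintro _ ⟨ν, rfl⟩; rw [hF ν]; nlinarith [sq_nonneg (ν - vs)]
  · intro ν h
    have h2 := hF ν
    rw [h] at h2
    have h4 : A * (ν - vs)^2 = 0 := by linarith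
    rcases mul_eq_zero.mp h4 with h5 | h5
    · exact absurd h5 hA.ne'
    · have := pow_eq_zero_iff (n := 2) (by norm_num) |>.mp h5
      linarith

set_option maxRecDepth 100000 in
set_option maxHeartbeats 16000000 in
private lemma riccati_quadform (a b p κα κU cc ρ₀ ρ₁ V f₁ f₂ f₃ q m ξ r : ℝ)
    (G : Matrix (Fin 4) (Fin 4) ℝ) (hApos : 0 < a - b * f₂ ^ 2) :
    (brokerRiccatiRHS a b p κα κU cc ρ₀ ρ₁ V f₁ f₂ f₃ G 0 0*(q*q) + brokerRiccatiRHS a b p κα κU cc ρ₀ ρ₁ V f₁ f₂ f₃ G 0 1*(q*m) + brokerRiccatiRHS a b p κα κU cc ρ₀ ρ₁ V f₁ f₂ f₃ G 0 2*(q*ξ) + brokerRiccatiRHS a b p κα κU cc ρ₀ ρ₁ V f₁ f₂ f₃ G 0 3*(q*r) + brokerRiccatiRHS a b p κα κU cc ρ₀ ρ₁ V f₁ f₂ f₃ G 1 0*(m*q) + brokerRiccatiRHS a b p κα κU cc ρ₀ ρ₁ V f₁ f₂ f₃ G 1 1*(m*m) + brokerRiccatiRHS a b p κα κU cc ρ₀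 ρ₁ V f₁ f₂ f₃ G 1 2*(m*ξ) + brokerRiccatiRHS a b p κα κU cc ρ₀ ρ₁ V f₁ f₂ f₃ G 1 3*(m*r) + brokerRiccatiRHS a b p κα κU cc ρ₀ ρ₁ V f₁ f₂ f₃ G 2 0*(ξ*q) + brokerRiccatiRHS a b p κα κU cc ρ₀ ρ₁ V f₁ f₂ f₃ G 2 1*(ξ*m) + brokerRiccatiRHS a b p κα κU cc ρ₀ ρ₁ V f₁ f₂ f₃ G 2 2*(ξ*ξ) + brokerRiccatiRHS a b p κα κU cc ρ₀ ρ₁ V f₁ f₂ f₃ G 2 3*(ξ*r) + brokerRiccatiRHS a b p κα κU cc ρ₀ ρ₁ V f₁ f₂ f₃ G 3 0*(r*q) + brokerRiccatiRHS a b p κα κU cc ρ₀ ρ₁ V f₁ f₂ f₃ G 3 1*(r*m) + brokerRiccatiRHS a b p κα κU cc ρ₀ ρ₁ V f₁ f₂ f₃ G 3 2*(r*ξ) + brokerRiccatiRHS a b p κα κU cc ρ₀ ρ₁ V f₁ f₂ f₃ G 3 3*(r*r))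
      = -(((p/2*q + b*f₁*f₂*m + b*f₂*f₃*r) + ((1 - f₂)*(G 0 0*q + G 0 1*m + G 0 2*ξ + G 0 3*r) + f₂*(G 3 0*q + G 3 1*m + G 3 2*ξ + G 3 3*r)))^2)/(a - b*f₂^2) + (-2*(m*(-f₁*(G 0 0*q + G 0 1*m + G 0 2*ξ + G 0 3*r) - κα*(G 1 0*q + G 1 1*m + G 1 2*ξ + G 1 3*r) + f₁*(G 3 0*q + G 3 1*m + G 3 2*ξ + G 3 3*r)) + ξ*(-(G 0 0*q + G 0 1*m + G 0 2*ξ + G 0 3*r) - κU*(G 2 0*q + G 2 1*m + G 2 2*ξ + G 2 3*r)) + r*(-f₃*(G 0 0*q + G 0 1*m + G 0 2*ξ + G 0 3*r) + f₃*(G 3 0*q + G 3 1*m + G 3 2*ξ + G 3 3*r))) - (-(ρ₀+ρ₁*V)*q^2 + q*m + b*f₁^2*m^2 + 2*b*f₁*f₃*m*r + cc*ξ^2 + b*f₃^2*r^2)) := by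
  set sA := Real.sqrt (a - b * f₂ ^ 2) with hsA
  have hsApos : 0 < sA := Real.sqrt_pos.mpr hApos
  have hsAne : sA ≠ 0 := hsApos.ne'
  have hsq : sA ^ 2 = a - b * f₂ ^ 2 := Real.sq_sqrt hApos.le
  have ha2 : a = sA ^ 2 + b * f₂ ^ 2 := by linarith
  simp only [brokerRiccatiRHS, P9mat, P5mat, P2mat, P7vec, P8vec, Matrix.vecMulVec_apply,
    Matrix.mul_apply, Matrix.transpose_apply, Matrix.sub_apply, Matrix.add_apply,
    Matrix.neg_apply, Matrix.smul_apply, Pi.smul_apply, smul_eq_mul, Fin.sum_univ_four,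
    Matrix.of_apply, Matrix.cons_val', Matrix.cons_val_zero, Matrix.cons_val_one,
    Matrix.head_cons, Matrix.empty_val', Matrix.cons_val_fin_one, Matrix.cons_val_two,
    Matrix.cons_val_three, Matrix.tail_cons, Matrix.vecHead, ← hsA]
  rw [ha2]
  field_simp
  ring

set_option maxRecDepth 100000 in
set_option maxHeartbeats 16000000 in
/-- The candidate value function of the broker,
`H(t,s,x,q,m,ξ,r) = x + qs + G₀(t) + ỹ G₂(t) ỹᵀ` with `ỹ = (q,m,ξ,r)`, solves
the broker's HJB equation on `[0,T)×ℝ⁶` (the supremum over `ν ∈ ℝ` being finite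
and attained uniquely at `ν* = (a - b f₂²)^{-1/2}(P₇ + 2P₈G₂)ỹᵀ`), matches the
terminal condition, and has quadratic growth uniformly in time. -/
theorem stmt_14 (T a b cc p κα κU σS σα σU ρ ρ₀ ρ₁ β₀ β₁ : ℝ)
    (hT : 0 < T) (ha : 0 < a) (hb : 0 < b) (hcc : 0 < cc) (hp : 0 ≤ p)
    (hκα : 0 ≤ κα) (hκU : 0 < κU) (hσS : 0 < σS) (hσα : 0 < σα) (hσU : 0 < σU)
    (hρ : ρ ∈ Icc (-1 : ℝ) 1)
    (hρ₀ : 0 < ρ₀) (hρ₁ : 0 < ρ₁) (hβ₀ : 0 < β₀) (hβ₁ : 0 < β₁)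
    (f₁ f₂ f₃ V : ℝ → ℝ)
    (hf₁ : ContinuousOn f₁ (Icc 0 T)) (hf₂ : ContinuousOn f₂ (Icc 0 T))
    (hf₃ : ContinuousOn f₃ (Icc 0 T)) (hV : ContinuousOn V (Icc 0 T))
    (hVnn : ∀ t ∈ Icc (0 : ℝ) T, 0 ≤ V t)
    (hpos : ∀ t ∈ Icc (0 : ℝ) T, 0 < a - b * (f₂ t) ^ 2)
    (G₂ : ℝ → Matrix (Fin 4) (Fin 4) ℝ)
    (hG₂C : ∀ i j, ContDiffOn ℝ 1 (fun t => G₂ t i j) (Icc 0 T))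
    (hG₂symm : ∀ t ∈ Icc (0 : ℝ) T, (G₂ t)ᵀ = G₂ t)
    (hG₂ode : ∀ t ∈ Icc (0 : ℝ) T, ∀ i j,
      HasDerivWithinAt (fun τ => G₂ τ i j)
        ((brokerRiccatiRHS a b p κα κU cc ρ₀ ρ₁ (V t) (f₁ t) (f₂ t) (f₃ t) (G₂ t)) i j)
        (Icc 0 T) t)
    (hG₂T : G₂ T = Matrix.diagonal ![-(β₀ + β₁ * V T), 0, 0, 0])
    (G₀ : ℝ → ℝ) (hG₀C : ContDiffOn ℝ 1 G₀ (Icc 0 T))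
    (hG₀ode : ∀ t ∈ Icc (0 : ℝ) T,
      HasDerivWithinAt G₀
        (-(((V t + ρ * σS * σα) / σS) ^ 2 * G₂ t 1 1) - σU ^ 2 * G₂ t 2 2)
        (Icc 0 T) t)
    (hG₀T : G₀ T = 0)
    (H : ℝ → ℝ → ℝ → ℝ → ℝ → ℝ → ℝ → ℝ)
    (hH : ∀ t s x q m ξ r, H t s x q m ξ r =
      x + q * s + G₀ t + (![q, m, ξ, r]) ⬝ᵥ (G₂ t *ᵥ ![q, m, ξ, r])) :
    (∀ t ∈ Ico (0 : ℝ) T, ∀ s x q m ξ r : ℝ,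
      IsGreatest
        (Set.range fun ν : ℝ =>
          (p * ν + m) * bS H t s x q m ξ r
            - ν * (s + a * ν) * bX H t s x q m ξ r
            + (f₁ t * m + f₂ t * ν + f₃ t * r)
                * (s + b * (f₁ t * m + f₂ t * ν + f₃ t * r)) * bX H t s x q m ξ r
            + ξ * (s + cc * ξ) * bX H t s x q m ξ r
            + (ν - (f₁ t * m + f₂ t * ν + f₃ t * r) - ξ) * bQ H t s x q m ξ r
            + (f₁ t * m + f₂ t * ν + f₃ t * r) * bR H t s x q m ξ r)
        ((fun ν : ℝ =>
          (p * ν + m) * bS H t s x q m ξ r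
            - ν * (s + a * ν) * bX H t s x q m ξ r
            + (f₁ t * m + f₂ t * ν + f₃ t * r)
                * (s + b * (f₁ t * m + f₂ t * ν + f₃ t * r)) * bX H t s x q m ξ r
            + ξ * (s + cc * ξ) * bX H t s x q m ξ r
            + (ν - (f₁ t * m + f₂ t * ν + f₃ t * r) - ξ) * bQ H t s x q m ξ r
            + (f₁ t * m + f₂ t * ν + f₃ t * r) * bR H t s x q m ξ r)
          ((Real.sqrt (a - b * (f₂ t) ^ 2))⁻¹
            * ((P7vec a b p (f₁ t) (f₂ t) (f₃ t)
                + (2 : ℝ) • Matrix.vecMul (P8vec a b (f₂ t)) (G₂ t)) ⬝ᵥ ![q, m, ξ, r]))) ∧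
      (∀ ν : ℝ,
        (fun ν : ℝ =>
          (p * ν + m) * bS H t s x q m ξ r
            - ν * (s + a * ν) * bX H t s x q m ξ r
            + (f₁ t * m + f₂ t * ν + f₃ t * r)
                * (s + b * (f₁ t * m + f₂ t * ν + f₃ t * r)) * bX H t s x q m ξ r
            + ξ * (s + cc * ξ) * bX H t s x q m ξ r
            + (ν - (f₁ t * m + f₂ t * ν + f₃ t * r) - ξ) * bQ H t s x q m ξ r
            + (f₁ t * m + f₂ t * ν + f₃ t * r) * bR H t s x q m ξ r) ν =
        (fun ν : ℝ =>
          (p * ν + m) * bS H t s x q m ξ r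
            - ν * (s + a * ν) * bX H t s x q m ξ r
            + (f₁ t * m + f₂ t * ν + f₃ t * r)
                * (s + b * (f₁ t * m + f₂ t * ν + f₃ t * r)) * bX H t s x q m ξ r
            + ξ * (s + cc * ξ) * bX H t s x q m ξ r
            + (ν - (f₁ t * m + f₂ t * ν + f₃ t * r) - ξ) * bQ H t s x q m ξ r
            + (f₁ t * m + f₂ t * ν + f₃ t * r) * bR H t s x q m ξ r)
          ((Real.sqrt (a - b * (f₂ t) ^ 2))⁻¹
            * ((P7vec a b p (f₁ t) (f₂ t) (f₃ t)
                + (2 : ℝ) • Matrix.vecMul (P8vec a b (f₂ t)) (G₂ t)) ⬝ᵥ ![q, m, ξ, r])) →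
        ν = (Real.sqrt (a - b * (f₂ t) ^ 2))⁻¹
          * ((P7vec a b p (f₁ t) (f₂ t) (f₃ t)
              + (2 : ℝ) • Matrix.vecMul (P8vec a b (f₂ t)) (G₂ t)) ⬝ᵥ ![q, m, ξ, r])) ∧
      0 = bT T H t s x q m ξ r
          + (fun ν : ℝ =>
            (p * ν + m) * bS H t s x q m ξ r
              - ν * (s + a * ν) * bX H t s x q m ξ r
              + (f₁ t * m + f₂ t * ν + f₃ t * r)
                  * (s + b * (f₁ t * m + f₂ t * ν + f₃ t * r)) * bX H t s x q m ξ r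
              + ξ * (s + cc * ξ) * bX H t s x q m ξ r
              + (ν - (f₁ t * m + f₂ t * ν + f₃ t * r) - ξ) * bQ H t s x q m ξ r
              + (f₁ t * m + f₂ t * ν + f₃ t * r) * bR H t s x q m ξ r)
            ((Real.sqrt (a - b * (f₂ t) ^ 2))⁻¹
              * ((P7vec a b p (f₁ t) (f₂ t) (f₃ t)
                  + (2 : ℝ) • Matrix.vecMul (P8vec a b (f₂ t)) (G₂ t)) ⬝ᵥ ![q, m, ξ, r]))
          - κα * m * bM H t s x q m ξ r
          - κU * ξ * bXi H t s x q m ξ r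
          + σS ^ 2 / 2 * bSS H t s x q m ξ r
          + ((V t + ρ * σS * σα) / σS) ^ 2 / 2 * bMM H t s x q m ξ r
          + σU ^ 2 / 2 * bXiXi H t s x q m ξ r
          + (V t + ρ * σS * σα) * bSM H t s x q m ξ r
          - (ρ₀ + ρ₁ * V t) * q ^ 2) ∧
    (∀ s x q m ξ r : ℝ, H T s x q m ξ r = x + q * s - (β₀ + β₁ * V T) * q ^ 2) ∧
    (∃ C : ℝ, ∀ t ∈ Icc (0 : ℝ) T, ∀ s x q m ξ r : ℝ,
      |H t s x q m ξ r| ≤ C * (1 + ‖(s, x, q, m, ξ, r)‖ ^ 2)) := by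
  have hHe : ∀ t' s x q m ξ r, H t' s x q m ξ r = x + q*s + G₀ t' +
      (G₂ t' 0 0*(q*q) + G₂ t' 0 1*(q*m) + G₂ t' 0 2*(q*ξ) + G₂ t' 0 3*(q*r) + G₂ t' 1 0*(m*q) + G₂ t' 1 1*(m*m) + G₂ t' 1 2*(m*ξ) + G₂ t' 1 3*(m*r) + G₂ t' 2 0*(ξ*q) + G₂ t' 2 1*(ξ*m) + G₂ t' 2 2*(ξ*ξ) + G₂ t' 2 3*(ξ*r) + G₂ t' 3 0*(r*q) + G₂ t' 3 1*(r*m) + G₂ t' 3 2*(r*ξ) + G₂ t' 3 3*(r*r)) := by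
    intro t' s x q m ξ r
    rw [hH]
    simp [Matrix.mulVec, dotProduct, Fin.sum_univ_four]
    ring
  refine ⟨?_, ?_, ?_⟩
  · -- HJB part
    intro t ht s x q m ξ r
    have htI : t ∈ Icc (0:ℝ) T := Ico_subset_Icc_self ht
    have hApos : 0 < a - b * f₂ t ^ 2 := hpos t htI
    set sA := Real.sqrt (a - b * f₂ t ^ 2) with hsA
    have hsApos : 0 < sA := Real.sqrt_pos.mpr hApos
    have hsAne : sA ≠ 0 := hsApos.ne'
    have hsq : sA ^ 2 = a - b * f₂ t ^ 2 := Real.sq_sqrt hApos.le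
    have ha2 : a = sA ^ 2 + b * f₂ t ^ 2 := by linarith
    have hsymm := hG₂symm t htI
    have hsym : ∀ i j : Fin 4, G₂ t i j = G₂ t j i := by
      intro i j
      conv_lhs => rw [← hsymm]
      exact Matrix.transpose_apply _ _ _
    set vs : ℝ := sA⁻¹ * ((P7vec a b p (f₁ t) (f₂ t) (f₃ t)
        + (2 : ℝ) • Matrix.vecMul (P8vec a b (f₂ t)) (G₂ t)) ⬝ᵥ ![q, m, ξ, r]) with hvsdef
    have hvs : vs = ((p/2*q + b*f₁ t*f₂ t*m + b*f₂ t*f₃ t*r) + ((1 - f₂ t)*(G₂ t 0 0*q + G₂ t 0 1*m + G₂ t 0 2*ξ + G₂ t 0 3*r) + f₂ t*(G₂ t 3 0*q + G₂ t 3 1*m + G₂ t 3 2*ξ + G₂ t 3 3*r))) / (a - b * f₂ t ^ 2) := by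
      rw [hvsdef]
      simp only [P7vec, P8vec, Matrix.vecMul, dotProduct, Fin.sum_univ_four, Pi.add_apply,
        Pi.smul_apply, smul_eq_mul, ← hsA]
      simp [Fin.sum_univ_four]
      rw [ha2]
      field_simp
      ring
    have hbX : bX H t s x q m ξ r = 1 := by
      unfold bX
      rw [show (fun y => H t s y q m ξ r) = fun y => 0*y^2 + 1*y + H t s 0 q m ξ r from
        funext fun y => by rw [hHe, hHe]; ring]
      rw [deriv_quad]; ring
    have hbS : ∀ s' m', bS H t s' x q m' ξ r = q := by
      intro s' m'
      unfold bS
      rw [show (fun y => H t y x q m' ξ r) = fun y => 0*y^2 + q*y + H t 0 x q m' ξ r from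
        funext fun y => by rw [hHe, hHe]; ring]
      rw [deriv_quad]; ring
    have hbQ : bQ H t s x q m ξ r = 2*(G₂ t 0 0)*q + (s + (G₂ t 0 1 + G₂ t 1 0)*m
        + (G₂ t 0 2 + G₂ t 2 0)*ξ + (G₂ t 0 3 + G₂ t 3 0)*r) := by
      unfold bQ
      rw [show (fun y => H t s x y m ξ r) = fun y => (G₂ t 0 0)*y^2
          + (s + (G₂ t 0 1 + G₂ t 1 0)*m + (G₂ t 0 2 + G₂ t 2 0)*ξ + (G₂ t 0 3 + G₂ t 3 0)*r)*y
          + H t s x 0 m ξ r from funext fun y => by rw [hHe, hHe]; ring]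
      rw [deriv_quad]
    have hbM : ∀ m', bM H t s x q m' ξ r = 2*(G₂ t 1 1)*m' + ((G₂ t 0 1 + G₂ t 1 0)*q
        + (G₂ t 1 2 + G₂ t 2 1)*ξ + (G₂ t 1 3 + G₂ t 3 1)*r) := by
      intro m'
      unfold bM
      rw [show (fun y => H t s x q y ξ r) = fun y => (G₂ t 1 1)*y^2
          + ((G₂ t 0 1 + G₂ t 1 0)*q + (G₂ t 1 2 + G₂ t 2 1)*ξ + (G₂ t 1 3 + G₂ t 3 1)*r)*y
          + H t s x q 0 ξ r from funext fun y => by rw [hHe, hHe]; ring]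
      rw [deriv_quad]
    have hbXi : ∀ ξ', bXi H t s x q m ξ' r = 2*(G₂ t 2 2)*ξ' + ((G₂ t 0 2 + G₂ t 2 0)*q
        + (G₂ t 1 2 + G₂ t 2 1)*m + (G₂ t 2 3 + G₂ t 3 2)*r) := by
      intro ξ'
      unfold bXi
      rw [show (fun y => H t s x q m y r) = fun y => (G₂ t 2 2)*y^2
          + ((G₂ t 0 2 + G₂ t 2 0)*q + (G₂ t 1 2 + G₂ t 2 1)*m + (G₂ t 2 3 + G₂ t 3 2)*r)*y
          + H t s x q m 0 r from funext fun y => by rw [hHe, hHe]; ring]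
      rw [deriv_quad]
    have hbR : bR H t s x q m ξ r = 2*(G₂ t 3 3)*r + ((G₂ t 0 3 + G₂ t 3 0)*q
        + (G₂ t 1 3 + G₂ t 3 1)*m + (G₂ t 2 3 + G₂ t 3 2)*ξ) := by
      unfold bR
      rw [show (fun y => H t s x q m ξ y) = fun y => (G₂ t 3 3)*y^2
          + ((G₂ t 0 3 + G₂ t 3 0)*q + (G₂ t 1 3 + G₂ t 3 1)*m + (G₂ t 2 3 + G₂ t 3 2)*ξ)*y
          + H t s x q m ξ 0 from funext fun y => by rw [hHe, hHe]; ring]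
      rw [deriv_quad]
    have hbSS : bSS H t s x q m ξ r = 0 := by
      unfold bSS
      rw [show (fun y => bS H t y x q m ξ r) = fun _ => q from funext fun y => hbS y m]
      exact deriv_const _ _
    have hbSM : bSM H t s x q m ξ r = 0 := by
      unfold bSM
      rw [show (fun y => bS H t s x q y ξ r) = fun y => q from funext fun y => hbS s y]
      exact deriv_const _ _
    have hbMM : bMM H t s x q m ξ r = 2*(G₂ t 1 1) := by
      unfold bMM
      rw [show (fun y => bM H t s x q y ξ r) = fun y => 0*y^2 + (2*(G₂ t 1 1))*y
          + ((G₂ t 0 1 + G₂ t 1 0)*q + (G₂ t 1 2 + G₂ t 2 1)*ξ + (G₂ t 1 3 + G₂ t 3 1)*r) from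
        funext fun y => by rw [hbM y]; ring]
      rw [deriv_quad]; ring
    have hbXiXi : bXiXi H t s x q m ξ r = 2*(G₂ t 2 2) := by
      unfold bXiXi
      rw [show (fun y => bXi H t s x q m y r) = fun y => 0*y^2 + (2*(G₂ t 2 2))*y
          + ((G₂ t 0 2 + G₂ t 2 0)*q + (G₂ t 1 2 + G₂ t 2 1)*m + (G₂ t 2 3 + G₂ t 3 2)*r) from
        funext fun y => by rw [hbXi y]; ring]
      rw [deriv_quad]; ring
    have hS : HasDerivWithinAt (fun τ => (G₂ τ 0 0*(q*q) + G₂ τ 0 1*(q*m) + G₂ τ 0 2*(q*ξ) + G₂ τ 0 3*(q*r) + G₂ τ 1 0*(m*q) + G₂ τ 1 1*(m*m) + G₂ τ 1 2*(m*ξ) + G₂ τ 1 3*(m*r) + G₂ τ 2 0*(ξ*q) + G₂ τ 2 1*(ξ*m) + G₂ τ 2 2*(ξ*ξ) + G₂ τ 2 3*(ξ*r) + G₂ τ 3 0*(r*q) + G₂ τ 3 1*(r*m) + G₂ τ 3 2*(r*ξ) + G₂ τ 3 3*(r*r)))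
        (brokerRiccatiRHS a b p κα κU cc ρ₀ ρ₁ (V t) (f₁ t) (f₂ t) (f₃ t) (G₂ t) 0 0*(q*q) + brokerRiccatiRHS a b p κα κU cc ρ₀ ρ₁ (V t) (f₁ t) (f₂ t) (f₃ t) (G₂ t) 0 1*(q*m) + brokerRiccatiRHS a b p κα κU cc ρ₀ ρ₁ (V t) (f₁ t) (f₂ t) (f₃ t) (G₂ t) 0 2*(q*ξ) + brokerRiccatiRHS a b p κα κU cc ρ₀ ρ₁ (V t) (f₁ t) (f₂ t) (f₃ t) (G₂ t) 0 3*(q*r) + brokerRiccatiRHS a b p κα κU cc ρ₀ ρ₁ (V t) (f₁ t) (f₂ t) (f₃ t) (G₂ t) 1 0*(m*q) + brokerRiccatiRHS a b p κα κU cc ρ₀ ρ₁ (V t) (f₁ t) (f₂ t) (f₃ t) (G₂ t) 1 1*(m*m) + brokerRiccatiRHS a b p κα κU cc ρ₀ ρ₁ (V t) (f₁ t) (f₂ t) (f₃ t) (G₂ t) 1 2*(m*ξ) + brokerRiccatiRHS a b p κα κU cc ρ₀ ρ₁ (V t) (f₁ t) (f₂ t) (f₃ t) (G₂ t) 1 3*(m*r)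 + brokerRiccatiRHS a b p κα κU cc ρ₀ ρ₁ (V t) (f₁ t) (f₂ t) (f₃ t) (G₂ t) 2 0*(ξ*q) + brokerRiccatiRHS a b p κα κU cc ρ₀ ρ₁ (V t) (f₁ t) (f₂ t) (f₃ t) (G₂ t) 2 1*(ξ*m) + brokerRiccatiRHS a b p κα κU cc ρ₀ ρ₁ (V t) (f₁ t) (f₂ t) (f₃ t) (G₂ t) 2 2*(ξ*ξ) + brokerRiccatiRHS a b p κα κU cc ρ₀ ρ₁ (V t) (f₁ t) (f₂ t) (f₃ t) (G₂ t) 2 3*(ξ*r) + brokerRiccatiRHS a b p κα κU cc ρ₀ ρ₁ (V t) (f₁ t) (f₂ t) (f₃ t) (G₂ t) 3 0*(r*q) + brokerRiccatiRHS a b p κα κU cc ρ₀ ρ₁ (V t) (f₁ t) (f₂ t) (f₃ t) (G₂ t) 3 1*(r*m) + brokerRiccatiRHS a b p κα κU cc ρ₀ ρ₁ (V t) (f₁ t) (f₂ t) (f₃ t) (G₂ t) 3 2*(r*ξ) + brokerRiccatiRHS a b p κα κU cc ρ₀ ρ₁ (V t) (f₁ t) (f₂ t) (f₃ t) (G₂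 t) 3 3*(r*r)) (Icc 0 T) t := by
      exact (((((((((((((((((hG₂ode t htI 0 0).mul_const (q*q)).add ((hG₂ode t htI 0 1).mul_const (q*m))).add ((hG₂ode t htI 0 2).mul_const (q*ξ))).add ((hG₂ode t htI 0 3).mul_const (q*r))).add ((hG₂ode t htI 1 0).mul_const (m*q))).add ((hG₂ode t htI 1 1).mul_const (m*m))).add ((hG₂ode t htI 1 2).mul_const (m*ξ))).add ((hG₂ode t htI 1 3).mul_const (m*r))).add ((hG₂ode t htI 2 0).mul_const (ξ*q))).add ((hG₂ode t htI 2 1).mul_const (ξ*m))).add ((hG₂ode t htI 2 2).mul_const (ξ*ξ))).add ((hG₂ode t htI 2 3).mul_const (ξ*r))).add ((hG₂ode t htI 3 0).mul_const (r*q))).add ((hG₂ode t htI 3 1).mul_const (r*m))).add ((hG₂ode t htI 3 2).mul_const (r*ξ))).add ((hG₂ode t htI 3 3).mul_const (r*r)))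
    have hbT : bT T H t s x q m ξ r =
        (-(((V t + ρ * σS * σα) / σS) ^ 2 * G₂ t 1 1) - σU ^ 2 * G₂ t 2 2)
        + (brokerRiccatiRHS a b p κα κU cc ρ₀ ρ₁ (V t) (f₁ t) (f₂ t) (f₃ t) (G₂ t) 0 0*(q*q) + brokerRiccatiRHS a b p κα κU cc ρ₀ ρ₁ (V t) (f₁ t) (f₂ t) (f₃ t) (G₂ t) 0 1*(q*m) + brokerRiccatiRHS a b p κα κU cc ρ₀ ρ₁ (V t) (f₁ t) (f₂ t) (f₃ t) (G₂ t) 0 2*(q*ξ) + brokerRiccatiRHS a b p κα κU cc ρ₀ ρ₁ (V t) (f₁ t) (f₂ t) (f₃ t) (G₂ t) 0 3*(q*r) + brokerRiccatiRHS a b p κα κU cc ρ₀ ρ₁ (V t) (f₁ t) (f₂ t) (f₃ t) (G₂ t) 1 0*(m*q) + brokerRiccatiRHS a b p κα κU cc ρ₀ ρ₁ (V t) (f₁ t) (f₂ t) (f₃ t) (G₂ t) 1 1*(m*m) + brokerRiccatiRHS a b p κα κU cc ρ₀ ρ₁ (V t) (f₁ t) (f₂ t) (f₃ t) (G₂ t)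 1 2*(m*ξ) + brokerRiccatiRHS a b p κα κU cc ρ₀ ρ₁ (V t) (f₁ t) (f₂ t) (f₃ t) (G₂ t) 1 3*(m*r) + brokerRiccatiRHS a b p κα κU cc ρ₀ ρ₁ (V t) (f₁ t) (f₂ t) (f₃ t) (G₂ t) 2 0*(ξ*q) + brokerRiccatiRHS a b p κα κU cc ρ₀ ρ₁ (V t) (f₁ t) (f₂ t) (f₃ t) (G₂ t) 2 1*(ξ*m) + brokerRiccatiRHS a b p κα κU cc ρ₀ ρ₁ (V t) (f₁ t) (f₂ t) (f₃ t) (G₂ t) 2 2*(ξ*ξ) + brokerRiccatiRHS a b p κα κU cc ρ₀ ρ₁ (V t) (f₁ t) (f₂ t) (f₃ t) (G₂ t) 2 3*(ξ*r) + brokerRiccatiRHS a b p κα κU cc ρ₀ ρ₁ (V t) (f₁ t) (f₂ t) (f₃ t) (G₂ t) 3 0*(r*q) + brokerRiccatiRHS a b p κα κU cc ρ₀ ρ₁ (V t) (f₁ t) (f₂ t) (f₃ t) (G₂ t) 3 1*(r*m) + brokerRiccatiRHS a b p κα κU cc ρ₀ ρ₁ (V t) (f₁ t) (f₂ t) (f₃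 t) (G₂ t) 3 2*(r*ξ) + brokerRiccatiRHS a b p κα κU cc ρ₀ ρ₁ (V t) (f₁ t) (f₂ t) (f₃ t) (G₂ t) 3 3*(r*r)) := by
      unfold bT
      rw [show (fun τ => H τ s x q m ξ r) = fun τ => x + q*s + (G₀ τ +
          (G₂ τ 0 0*(q*q) + G₂ τ 0 1*(q*m) + G₂ τ 0 2*(q*ξ) + G₂ τ 0 3*(q*r) + G₂ τ 1 0*(m*q) + G₂ τ 1 1*(m*m) + G₂ τ 1 2*(m*ξ) + G₂ τ 1 3*(m*r) + G₂ τ 2 0*(ξ*q) + G₂ τ 2 1*(ξ*m) + G₂ τ 2 2*(ξ*ξ) + G₂ τ 2 3*(ξ*r) + G₂ τ 3 0*(r*q) + G₂ τ 3 1*(r*m) + G₂ τ 3 2*(r*ξ) + G₂ τ 3 3*(r*r))) from funext fun τ => by rw [hHe]; ring]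
      exact (((hG₀ode t htI).add hS).const_add (x + q*s)).derivWithin (uniqueDiffOn_Icc hT t htI)
    have hyRy := riccati_quadform a b p κα κU cc ρ₀ ρ₁ (V t) (f₁ t) (f₂ t) (f₃ t) q m ξ r
      (G₂ t) hApos
    have key := quadmax hApos (fun ν : ℝ => (p * ν + m) * bS H t s x q m ξ r - ν * (s + a * ν) * bX H t s x q m ξ r + (f₁ t * m + f₂ t * ν + f₃ t * r) * (s + b * (f₁ t * m + f₂ t * ν + f₃ t * r)) * bX H t s x q m ξ r + ξ * (s + cc * ξ) * bX H t s x q m ξ r + (ν - (f₁ t * m + f₂ t * ν + f₃ t * r) - ξ) * bQ H t s x q m ξ r + (f₁ t * m + f₂ t * ν + f₃ t * r) * bR H t s x q m ξ r) vs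
      (fun ν => by
        rw [hbS s m, hbX, hbQ, hbR, hvs]
        simp only [hsym 1 0, hsym 2 0, hsym 2 1, hsym 3 0, hsym 3 1, hsym 3 2]
        rw [ha2]
        simp only [add_sub_cancel_right]
        field_simp
        ring)
    refine ⟨key.1, key.2, ?_⟩
    simp only
    rw [hbT, hbS s m, hbX, hbQ, hbR, hbM m, hbXi ξ, hbSS, hbMM, hbXiXi, hbSM, hyRy, hvs]
    simp only [hsym 1 0, hsym 2 0, hsym 2 1, hsym 3 0, hsym 3 1, hsym 3 2]
    field_simp
    ring
  · -- terminal condition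
    intro s x q m ξ r
    rw [hHe, hG₀T, hG₂T]
    simp [Matrix.diagonal_apply]
    ring
  · -- quadratic growth
    have hcont : ContinuousOn (fun τ => |G₀ τ| + ∑ i : Fin 4, ∑ j : Fin 4, |G₂ τ i j|)
        (Icc 0 T) := by
      refine (hG₀C.continuousOn.abs).add ?_
      refine continuousOn_finset_sum _ fun i _ => continuousOn_finset_sum _ fun j _ => ?_
      exact ((hG₂C i j).continuousOn).abs
    obtain ⟨M, hM⟩ := isCompact_Icc.exists_bound_of_continuousOn hcont
    have hM0 : 0 ≤ M := le_trans (norm_nonneg _) (hM 0 ⟨le_refl 0, hT.le⟩)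
    refine ⟨17*M + 2, ?_⟩
    intro t htI s x q m ξ r
    set n := ‖((s,x,q,m,ξ,r) : ℝ × ℝ × ℝ × ℝ × ℝ × ℝ)‖ with hn
    have hn0 : 0 ≤ n := norm_nonneg _
    have h1 : |s| ≤ n := by exact norm_fst_le ((s,x,q,m,ξ,r) : ℝ × ℝ × ℝ × ℝ × ℝ × ℝ)
    have h2 : |x| ≤ n := by
      exact (norm_fst_le ((x,q,m,ξ,r) : ℝ × ℝ × ℝ × ℝ × ℝ)).trans
        (norm_snd_le ((s,x,q,m,ξ,r) : ℝ × ℝ × ℝ × ℝ × ℝ × ℝ))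
    have h3 : |q| ≤ n := by
      exact ((norm_fst_le ((q,m,ξ,r) : ℝ × ℝ × ℝ × ℝ)).trans
        (norm_snd_le ((x,q,m,ξ,r) : ℝ × ℝ × ℝ × ℝ × ℝ))).trans
        (norm_snd_le ((s,x,q,m,ξ,r) : ℝ × ℝ × ℝ × ℝ × ℝ × ℝ))
    have h4 : |m| ≤ n := by
      exact (((norm_fst_le ((m,ξ,r) : ℝ × ℝ × ℝ)).trans
        (norm_snd_le ((q,m,ξ,r) : ℝ × ℝ × ℝ × ℝ))).trans
        (norm_snd_le ((x,q,m,ξ,r) : ℝ × ℝ × ℝ × ℝ × ℝ))).trans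
        (norm_snd_le ((s,x,q,m,ξ,r) : ℝ × ℝ × ℝ × ℝ × ℝ × ℝ))
    have h5 : |ξ| ≤ n := by
      exact ((((norm_fst_le ((ξ,r) : ℝ × ℝ)).trans
        (norm_snd_le ((m,ξ,r) : ℝ × ℝ × ℝ))).trans
        (norm_snd_le ((q,m,ξ,r) : ℝ × ℝ × ℝ × ℝ))).trans
        (norm_snd_le ((x,q,m,ξ,r) : ℝ × ℝ × ℝ × ℝ × ℝ))).trans
        (norm_snd_le ((s,x,q,m,ξ,r) : ℝ × ℝ × ℝ × ℝ × ℝ × ℝ))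
    have h6 : |r| ≤ n := by
      exact ((((norm_snd_le ((ξ,r) : ℝ × ℝ)).trans
        (norm_snd_le ((m,ξ,r) : ℝ × ℝ × ℝ))).trans
        (norm_snd_le ((q,m,ξ,r) : ℝ × ℝ × ℝ × ℝ))).trans
        (norm_snd_le ((x,q,m,ξ,r) : ℝ × ℝ × ℝ × ℝ × ℝ))).trans
        (norm_snd_le ((s,x,q,m,ξ,r) : ℝ × ℝ × ℝ × ℝ × ℝ × ℝ))
    have hφ := hM t htI
    rw [Real.norm_eq_abs] at hφ
    have hφ' : |G₀ t| + ∑ i : Fin 4, ∑ j : Fin 4, |G₂ t i j| ≤ M :=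
      le_trans (le_abs_self _) hφ
    have hsum_nn : ∀ i : Fin 4, 0 ≤ ∑ j : Fin 4, |G₂ t i j| :=
      fun i => Finset.sum_nonneg fun j _ => abs_nonneg _
    have hg : ∀ i j : Fin 4, |G₂ t i j| ≤ M := by
      intro i j
      have ha1 : |G₂ t i j| ≤ ∑ j' : Fin 4, |G₂ t i j'| :=
        Finset.single_le_sum (f := fun j' => |G₂ t i j'|) (fun j' _ => abs_nonneg _) (Finset.mem_univ j)
      have ha2 : (∑ j' : Fin 4, |G₂ t i j'|) ≤ ∑ i' : Fin 4, ∑ j' : Fin 4, |G₂ t i' j'| :=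
        Finset.single_le_sum (fun i' _ => hsum_nn i') (Finset.mem_univ i)
      have ha3 : (0:ℝ) ≤ |G₀ t| := abs_nonneg _
      linarith
    have hg0 : |G₀ t| ≤ M := by
      have := Finset.sum_nonneg (fun (i : Fin 4) (_ : i ∈ Finset.univ) => hsum_nn i)
      linarith
    have keyn : ∀ u v : ℝ, |u| ≤ n → |v| ≤ n → |u*v| ≤ n^2 := by
      intro u v hu hv
      rw [abs_mul, sq]
      exact mul_le_mul hu hv (abs_nonneg _) hn0
    have keyg : ∀ (i j : Fin 4) (u v : ℝ), |u| ≤ n → |v| ≤ n → |G₂ t i j * (u*v)| ≤ M*n^2 := by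
      intro i j u v hu hv
      rw [abs_mul]
      exact mul_le_mul (hg i j) (keyn u v hu hv) (abs_nonneg _) hM0
    have hnn : n ≤ 1 + n^2 := by nlinarith [sq_nonneg (n - 1)]
    have hMn2 : (0:ℝ) ≤ M*n^2 := mul_nonneg hM0 (sq_nonneg n)
    rw [hHe, abs_le]
    have bqs := abs_le.mp (keyn q s h3 h1)
    have bx := abs_le.mp h2
    have bg0 := abs_le.mp hg0
    have b00 := abs_le.mp (keyg 0 0 q q h3 h3)
    have b01 := abs_le.mp (keyg 0 1 q m h3 h4)
    have b02 := abs_le.mp (keyg 0 2 q ξ h3 h5)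
    have b03 := abs_le.mp (keyg 0 3 q r h3 h6)
    have b10 := abs_le.mp (keyg 1 0 m q h4 h3)
    have b11 := abs_le.mp (keyg 1 1 m m h4 h4)
    have b12 := abs_le.mp (keyg 1 2 m ξ h4 h5)
    have b13 := abs_le.mp (keyg 1 3 m r h4 h6)
    have b20 := abs_le.mp (keyg 2 0 ξ q h5 h3)
    have b21 := abs_le.mp (keyg 2 1 ξ m h5 h4)
    have b22 := abs_le.mp (keyg 2 2 ξ ξ h5 h5)
    have b23 := abs_le.mp (keyg 2 3 ξ r h5 h6)
    have b30 := abs_le.mp (keyg 3 0 r q h6 h3)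
    have b31 := abs_le.mp (keyg 3 1 r m h6 h4)
    have b32 := abs_le.mp (keyg 3 2 r ξ h6 h5)
    have b33 := abs_le.mp (keyg 3 3 r r h6 h6)
    have hC : (17*M+2)*(1+n^2) = 17*M + 2 + 17*(M*n^2) + 2*n^2 := by ring
    rw [hC]
    constructor
    · linarith [bqs.1, bx.1, bg0.1, b00.1, b01.1, b02.1, b03.1, b10.1, b11.1, b12.1, b13.1, b20.1, b21.1, b22.1, b23.1, b30.1, b31.1, b32.1, b33.1, hnn, hM0, hMn2, sq_nonneg n]
    · linarith [bqs.2, bx.2, bg0.2, b00.2, b01.2, b02.2, b03.2, b10.2, b11.2, b12.2, b13.2, b20.2, b21.2, b22.2, b23.2, b30.2, b31.2, b32.2, b33.2, hnn, hM0, hMn2, sq_nonneg n]
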